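/- arXiv:2006.16661 — 6 statements merged into one kernel-verified Lean document; each statement's English description precedes it below -/
import Mathlib

section
/- Let S be an ε-InitSOPSF from transition system T(Σ) to T(Σ̂) with associated K∞ function α. Then the relation R = {(z, ẑ) ∈ X × X̂ : S(z, ẑ) ≤ ε} is an ε̂-approximate initial-state opacity-preserving simulation relation from T(Σ) to T(Σ̂), where ε̂ = α⁻¹(ε). That is: (1a) for every z⁰ ∈ X₀ ∩ Xₛ there exists ẑ⁰ ∈ X̂₀ ∩ X̂ₛ with (z⁰, ẑ⁰) ∈ R; (1b) for every ẑ⁰ ∈ X̂₀ \ X̂ₛ there exists z⁰ ∈ X₀ \ Xₛ with (z⁰, ẑ⁰) ∈ R; (2) for all (z, ẑ) ∈ R, ‖H(z) − Ĥ(ẑ)‖ ≤ ε̂; (3) for all (z, ẑ) ∈ R, every transition z⁺ ∈ F(z, u) is matched by some ẑ⁺ ∈ F̂(ẑ, û) with (z⁺, ẑ⁺) ∈ R, and conversely. -/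
/-- An ε-InitSOPSF `S` from `T(Σ)` to `T(Σ̂)` with K∞ function `α`
induces an `ε̂`-approximate initial-state opacity-preserving simulation relation
`R = {(z, zh) | S z zh ≤ ε}` with `ε̂ = α⁻¹ ε`. -/
theorem initSOPSF_gives_InitSOP_relation
    {X Xh Y U Uh : Type*} [PseudoMetricSpace Y]
    (X0 Xs : Set X) (Xh0 Xhs : Set Xh)
    (F : X → U → Set X) (Fh : Xh → Uh → Set Xh)
    (H : X → Y) (Hh : Xh → Y)
    (S : X → Xh → ℝ) (ε : ℝ) (hε : 0 ≤ ε)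
    (α αinv : ℝ → ℝ)
    (hα_mono : StrictMonoOn α (Set.Ici 0)) (hα0 : α 0 = 0)
    (hα_cont : ContinuousOn α (Set.Ici 0))
    (hα_unbdd : ∀ M : ℝ, ∃ r : ℝ, 0 ≤ r ∧ M ≤ α r)
    (hαinv_left : ∀ r : ℝ, 0 ≤ r → αinv (α r) = r)
    (hαinv_mono : MonotoneOn αinv (Set.Ici 0))
    (hS_nonneg : ∀ z zh, 0 ≤ S z zh)
    -- S is an ε-InitSOPSF:
    (h1a : ∀ z0 ∈ X0 ∩ Xs, ∃ zh0 ∈ Xh0 ∩ Xhs, S z0 zh0 ≤ ε)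
    (h1b : ∀ zh0 ∈ Xh0 \ Xhs, ∃ z0 ∈ X0 \ Xs, S z0 zh0 ≤ ε)
    (h2 : ∀ z zh, α (dist (H z) (Hh zh)) ≤ S z zh)
    (h3a : ∀ z zh, S z zh ≤ ε → ∀ u, ∀ z' ∈ F z u,
      ∃ uh, ∃ zh' ∈ Fh zh uh, S z' zh' ≤ ε)
    (h3b : ∀ z zh, S z zh ≤ ε → ∀ uh, ∀ zh' ∈ Fh zh uh,
      ∃ u, ∃ z' ∈ F z u, S z' zh' ≤ ε) :
    -- R = {(z,zh) | S z zh ≤ ε} is an (αinv ε)-InitSOP simulation relation: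
    (∀ z0 ∈ X0 ∩ Xs, ∃ zh0 ∈ Xh0 ∩ Xhs, (z0, zh0) ∈ {p : X × Xh | S p.1 p.2 ≤ ε}) ∧
    (∀ zh0 ∈ Xh0 \ Xhs, ∃ z0 ∈ X0 \ Xs, (z0, zh0) ∈ {p : X × Xh | S p.1 p.2 ≤ ε}) ∧
    (∀ z zh, (z, zh) ∈ {p : X × Xh | S p.1 p.2 ≤ ε} →
      dist (H z) (Hh zh) ≤ αinv ε) ∧
    (∀ z zh, (z, zh) ∈ {p : X × Xh | S p.1 p.2 ≤ ε} → ∀ u, ∀ z' ∈ F z u,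
      ∃ uh, ∃ zh' ∈ Fh zh uh, (z', zh') ∈ {p : X × Xh | S p.1 p.2 ≤ ε}) ∧
    (∀ z zh, (z, zh) ∈ {p : X × Xh | S p.1 p.2 ≤ ε} → ∀ uh, ∀ zh' ∈ Fh zh uh,
      ∃ u, ∃ z' ∈ F z u, (z', zh') ∈ {p : X × Xh | S p.1 p.2 ≤ ε}) := by
  refine ⟨h1a, h1b, ?_, fun z zh h u z' hz' => h3a z zh h u z' hz',
    fun z zh h uh zh' hzh' => h3b z zh h uh zh' hzh'⟩
  intro z zh h
  have hd : 0 ≤ dist (H z) (Hh zh) := dist_nonneg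
  have hαd : 0 ≤ α (dist (H z) (Hh zh)) := by
    calc 0 = α 0 := hα0.symm
    _ ≤ α (dist (H z) (Hh zh)) := (hα_mono.monotoneOn) (Set.mem_Ici.2 le_rfl) (Set.mem_Ici.2 hd) hd
  have hle : α (dist (H z) (Hh zh)) ≤ ε := le_trans (h2 z zh) h
  calc dist (H z) (Hh zh) = αinv (α (dist (H z) (Hh zh))) := (hαinv_left _ hd).symm
  _ ≤ αinv ε := hαinv_mono (Set.mem_Ici.2 hαd) (Set.mem_Ici.2 hε) hle
end

section
/- Let T(Σ) and T(Σ̂) be transition systems with Ŷ ⊆ Y and let R ⊆ X × X̂ be an ε̂-approximate initial-state opacity-preserving simulation relation from T(Σ) to T(Σ̂), with ε̂ ≤ δ/2. If T(Σ̂) is (δ − 2ε̂)-approximate initial-state opaque, then T(Σ) is δ-approximate initial-state opaque. -/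
/-- `δ`-approximate initial-state opacity of a transition system with state set `X`,
initial states `X0`, secret states `Xs`, inputs `U`, transition map `F`
and output map `H` into a metric output space. -/
def ApproxInitStateOpaque {X U Y : Type*} [PseudoMetricSpace Y]
    (X0 Xs : Set X) (F : X → U → Set X) (H : X → Y) (δ : ℝ) : Prop :=
  ∀ (n : ℕ) (z : ℕ → X), z 0 ∈ X0 ∩ Xs →
    (∀ k < n, ∃ u, z (k + 1) ∈ F (z k) u) →
    ∃ zb : ℕ → X, zb 0 ∈ X0 \ Xs ∧
      (∀ k < n, ∃ u, zb (k + 1) ∈ F (zb k) u) ∧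
      ∀ k ≤ n, dist (H (z k)) (H (zb k)) ≤ δ

lemma lift_run {A B UA UB : Type*} (FA : A → UA → Set A) (FB : B → UB → Set B)
    (S : A → B → Prop)
    (hstep : ∀ a b, S a b → ∀ u, ∀ a' ∈ FA a u, ∃ ub, ∃ b' ∈ FB b ub, S a' b')
    (n : ℕ) (a : ℕ → A) (b0 : B) (h0 : S (a 0) b0)
    (ha : ∀ k < n, ∃ u, a (k + 1) ∈ FA (a k) u) :
    ∃ b : ℕ → B, b 0 = b0 ∧ (∀ k < n, ∃ ub, b (k + 1) ∈ FB (b k) ub) ∧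
      ∀ k ≤ n, S (a k) (b k) := by
  induction n with
  | zero =>
    refine ⟨fun _ => b0, rfl, fun k hk => absurd hk (Nat.not_lt_zero k), fun k hk => ?_⟩
    obtain rfl := Nat.le_zero.mp hk
    exact h0
  | succ n IH =>
    obtain ⟨b, hb0, hbstep, hbS⟩ := IH (fun k hk => ha k (hk.trans (Nat.lt_succ_self n)))
    obtain ⟨u, hu⟩ := ha n (Nat.lt_succ_self n)
    obtain ⟨ub, b', hb', hS'⟩ := hstep _ _ (hbS n le_rfl) u _ hu
    refine ⟨fun k => if k ≤ n then b k else b', by simp [hb0], ?_, ?_⟩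
    · intro k hk
      rcases Nat.lt_succ_iff_lt_or_eq.mp hk with h | rfl
      · obtain ⟨w, hw⟩ := hbstep k h
        exact ⟨w, by simp [Nat.le_of_lt h, Nat.succ_le_of_lt h, hw]⟩
      · exact ⟨ub, by simp [hb']⟩
    · intro k hk
      rcases Nat.le_succ_iff_eq_or_le.mp hk with rfl | h
      · simpa using hS'
      · simpa [h] using hbS k h

/-- if `R` is an `ε̂`-approximate initial-state opacity-preserving
simulation relation from `T(Σ)` to `T(Σ̂)` with `ε̂ ≤ δ/2`, and `T(Σ̂)` is
`(δ - 2ε̂)`-approximate initial-state opaque, then `T(Σ)` is `δ`-approximate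
initial-state opaque. -/
theorem opacity_preserved_by_InitSOP_relation
    {X Xh U Uh Y : Type*} [PseudoMetricSpace Y]
    (X0 Xs : Set X) (Xh0 Xhs : Set Xh)
    (F : X → U → Set X) (Fh : Xh → Uh → Set Xh)
    (H : X → Y) (Hh : Xh → Y)
    (R : Set (X × Xh)) (εh δ : ℝ) (hεh : 0 ≤ εh) (hδ : εh ≤ δ / 2)
    -- R is an εh-InitSOP simulation relation:
    (h1a : ∀ z0 ∈ X0 ∩ Xs, ∃ zh0 ∈ Xh0 ∩ Xhs, (z0, zh0) ∈ R)
    (h1b : ∀ zh0 ∈ Xh0 \ Xhs, ∃ z0 ∈ X0 \ Xs, (z0, zh0) ∈ R)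
    (h2 : ∀ z zh, (z, zh) ∈ R → dist (H z) (Hh zh) ≤ εh)
    (h3a : ∀ z zh, (z, zh) ∈ R → ∀ u, ∀ z' ∈ F z u,
      ∃ uh, ∃ zh' ∈ Fh zh uh, (z', zh') ∈ R)
    (h3b : ∀ z zh, (z, zh) ∈ R → ∀ uh, ∀ zh' ∈ Fh zh uh,
      ∃ u, ∃ z' ∈ F z u, (z', zh') ∈ R)
    (habs : ApproxInitStateOpaque Xh0 Xhs Fh Hh (δ - 2 * εh)) :
    ApproxInitStateOpaque X0 Xs F H δ := by
  intro n z hz0 hzrun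
  obtain ⟨zh0, hzh0, hR0⟩ := h1a (z 0) hz0
  obtain ⟨zh, hzheq, hzhrun, hzhS⟩ :=
    lift_run F Fh (fun a b => (a, b) ∈ R) h3a n z zh0 hR0 hzrun
  obtain ⟨zbh, hzbh0, hzbhrun, hzbhdist⟩ := habs n zh (hzheq ▸ hzh0) hzhrun
  obtain ⟨zb0, hzb0, hRb0⟩ := h1b (zbh 0) hzbh0
  obtain ⟨zb, hzbeq, hzbrun, hzbS⟩ :=
    lift_run Fh F (fun b a => (a, b) ∈ R)
      (fun b a hS uh b' hb' => h3b a b hS uh b' hb') n zbh zb0 hRb0 hzbhrun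
  refine ⟨zb, hzbeq ▸ hzb0, hzbrun, fun k hk => ?_⟩
  calc dist (H (z k)) (H (zb k))
      ≤ dist (H (z k)) (Hh (zh k)) + dist (Hh (zh k)) (Hh (zbh k))
          + dist (Hh (zbh k)) (H (zb k)) := dist_triangle4 _ _ _ _
    _ ≤ εh + (δ - 2 * εh) + εh := by
        refine add_le_add (add_le_add (h2 _ _ (hzhS k hk)) (hzbhdist k hk)) ?_
        rw [dist_comm]
        exact h2 _ _ (hzbS k hk)
    _ = δ := by ring
end

section
/- Combining the previous two results: if there exists an ε-InitSOPSF S from T(Σ) to T(Σ̂) with associated K∞ function α, and α⁻¹(ε) ≤ δ/2, and T(Σ̂) is (δ − 2α⁻¹(ε))-approximate initial-state opaque, then T(Σ) is δ-approximate initial-state opaque. -/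
lemma simulate_run {A B : Type*} (a : ℕ → A) (n : ℕ) (R : A → B → Prop)
    (tr : B → B → Prop) (b0 : B) (h0 : R (a 0) b0)
    (hstep : ∀ k < n, ∀ b, R (a k) b → ∃ b', tr b b' ∧ R (a (k + 1)) b') :
    ∃ b : ℕ → B, b 0 = b0 ∧ (∀ k < n, tr (b k) (b (k + 1))) ∧
      ∀ k ≤ n, R (a k) (b k) := by
  classical
  let next : ℕ → B → B := fun k b =>
    if h : k < n ∧ R (a k) b then (hstep k h.1 b h.2).choose else b
  let b : ℕ → B := fun k => Nat.rec b0 next k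
  have hbsucc : ∀ k, b (k + 1) = next k (b k) := fun k => rfl
  have hinv : ∀ k, k ≤ n → R (a k) (b k) := by
    intro k
    induction k with
    | zero => intro _; exact h0
    | succ k ih =>
      intro hk
      have hk' : k < n := Nat.lt_of_succ_le hk
      have hR := ih hk'.le
      rw [hbsucc]
      show R _ (next k (b k))
      rw [show next k (b k) = (hstep k hk' (b k) hR).choose from dif_pos ⟨hk', hR⟩]
      exact (hstep k hk' (b k) hR).choose_spec.2
  refine ⟨b, rfl, ?_, hinv⟩
  intro k hk
  have hR := hinv k hk.le
  rw [hbsucc]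
  show tr (b k) (next k (b k))
  rw [show next k (b k) = (hstep k hk (b k) hR).choose from dif_pos ⟨hk, hR⟩]
  exact (hstep k hk (b k) hR).choose_spec.1

/-- if there is an ε-InitSOPSF `S` from `T(Σ)` to `T(Σ̂)` with K∞
function `α`, `α⁻¹ ε ≤ δ/2`, and `T(Σ̂)` is `(δ - 2 α⁻¹ ε)`-approximate
initial-state opaque, then `T(Σ)` is `δ`-approximate initial-state opaque. -/
theorem opacity_preserved_by_InitSOPSF
    {X Xh U Uh Y : Type*} [PseudoMetricSpace Y]
    (X0 Xs : Set X) (Xh0 Xhs : Set Xh)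
    (F : X → U → Set X) (Fh : Xh → Uh → Set Xh)
    (H : X → Y) (Hh : Xh → Y)
    (S : X → Xh → ℝ) (ε δ : ℝ) (hε : 0 ≤ ε)
    (α αinv : ℝ → ℝ)
    (hα_mono : StrictMonoOn α (Set.Ici 0)) (hα0 : α 0 = 0)
    (hα_cont : ContinuousOn α (Set.Ici 0))
    (hα_unbdd : ∀ M : ℝ, ∃ r : ℝ, 0 ≤ r ∧ M ≤ α r)
    (hαinv_left : ∀ r : ℝ, 0 ≤ r → αinv (α r) = r)
    (hαinv_mono : MonotoneOn αinv (Set.Ici 0))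
    (hS_nonneg : ∀ z zh, 0 ≤ S z zh)
    -- S is an ε-InitSOPSF:
    (h1a : ∀ z0 ∈ X0 ∩ Xs, ∃ zh0 ∈ Xh0 ∩ Xhs, S z0 zh0 ≤ ε)
    (h1b : ∀ zh0 ∈ Xh0 \ Xhs, ∃ z0 ∈ X0 \ Xs, S z0 zh0 ≤ ε)
    (h2 : ∀ z zh, α (dist (H z) (Hh zh)) ≤ S z zh)
    (h3a : ∀ z zh, S z zh ≤ ε → ∀ u, ∀ z' ∈ F z u,
      ∃ uh, ∃ zh' ∈ Fh zh uh, S z' zh' ≤ ε)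
    (h3b : ∀ z zh, S z zh ≤ ε → ∀ uh, ∀ zh' ∈ Fh zh uh,
      ∃ u, ∃ z' ∈ F z u, S z' zh' ≤ ε)
    (hhalf : αinv ε ≤ δ / 2)
    (habs : ApproxInitStateOpaque Xh0 Xhs Fh Hh (δ - 2 * αinv ε)) :
    ApproxInitStateOpaque X0 Xs F H δ := by
  have hdist : ∀ z zh, S z zh ≤ ε → dist (H z) (Hh zh) ≤ αinv ε := by
    intro z zh hS
    have hαd : α (dist (H z) (Hh zh)) ≤ ε := (h2 z zh).trans hS
    have hαd0 : 0 ≤ α (dist (H z) (Hh zh)) := by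
      rw [← hα0]
      exact hα_mono.monotoneOn (Set.mem_Ici.mpr le_rfl) (Set.mem_Ici.mpr dist_nonneg) dist_nonneg
    have := hαinv_mono hαd0 hε hαd
    rwa [hαinv_left _ dist_nonneg] at this
  intro n z hz0 hz
  obtain ⟨zh0, hzh0mem, hzh0S⟩ := h1a (z 0) hz0
  obtain ⟨zh, hzh0, hzhtr, hzhS⟩ := simulate_run z n (fun z zh => S z zh ≤ ε)
    (fun b b' => ∃ uh, b' ∈ Fh b uh) zh0 hzh0S (by
      intro k hk b hb
      obtain ⟨u, hu⟩ := hz k hk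
      obtain ⟨uh, zh', hzh', hS⟩ := h3a (z k) b hb u (z (k + 1)) hu
      exact ⟨zh', ⟨uh, hzh'⟩, hS⟩)
  obtain ⟨zhb, hzhb0, hzhbtr, hzhbd⟩ := habs n zh (hzh0 ▸ hzh0mem) hzhtr
  obtain ⟨zb0, hzb0mem, hzb0S⟩ := h1b (zhb 0) hzhb0
  obtain ⟨zb, hzb0, hzbtr, hzbS⟩ := simulate_run zhb n (fun zh z => S z zh ≤ ε)
    (fun b b' => ∃ u, b' ∈ F b u) zb0 hzb0S (by
      intro k hk b hb
      obtain ⟨uh, huh⟩ := hzhbtr k hk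
      obtain ⟨u, z', hz', hS⟩ := h3b b (zhb k) hb uh (zhb (k + 1)) huh
      exact ⟨z', ⟨u, hz'⟩, hS⟩)
  refine ⟨zb, hzb0 ▸ hzb0mem, hzbtr, ?_⟩
  intro k hk
  have d1 : dist (H (z k)) (Hh (zh k)) ≤ αinv ε := hdist _ _ (hzhS k hk)
  have d2 : dist (Hh (zh k)) (Hh (zhb k)) ≤ δ - 2 * αinv ε := hzhbd k hk
  have d3 : dist (Hh (zhb k)) (H (zb k)) ≤ αinv ε := by
    rw [dist_comm]; exact hdist _ _ (hzbS k hk)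
  calc dist (H (z k)) (H (zb k)) ≤
      dist (H (z k)) (Hh (zh k)) + dist (Hh (zh k)) (Hh (zhb k)) +
        dist (Hh (zhb k)) (H (zb k)) := dist_triangle4 _ _ _ _
    _ ≤ δ := by linarith
end

section
/- Dwell-time decay, switching case: with V((x,p,l),(x̂,p,l)) := V_p(x,x̂)·κ_p^{−l/ϵ}, assume V_{p⁺}(x,y) ≤ μ V_p(x,y) for all x,y and all modes p, p⁺ (with μ ≥ 1), and V_p(f_p(x,w), x̂⁺) ≤ κ_p V_p(x,x̂) + ρ_p(‖w−ŵ‖) + γ_p(η). If l = k_d − 1, l⁺ = 0, p⁺ ≠ p, ϵ > 1, and the dwell-time condition k_d ≥ ϵ·ln(μ)/ln(1/κ_p) + 1 holds (equivalently μ·κ_p^{(k_d−1)/ϵ} ≤ 1), then V((x⁺,p⁺,0),(x̂⁺,p⁺,0)) = V_{p⁺}(x⁺, x̂⁺) ≤ κ_p^{(ϵ−1)/ϵ} V((x,p,l),(x̂,p,l)) + κ_p^{−k_d/ϵ}(ρ_p(‖w−ŵ‖) + γ_p(η)), where x⁺ = f_p(x,w). -/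
/-- dwell-time decay, switching case. With multiple Lyapunov
functions `V_p` satisfying `V_p ≤ μ V_q` (μ ≥ 1) and the one-step bound
`V_p(f_p(x,w), x̂⁺) ≤ κ_p V_p(x,x̂) + ρ_p(‖w−ŵ‖) + γ_p(η)`, if `l = k_d − 1`,
a switch occurs to `p⁺ ≠ p` with `l⁺ = 0`, and the dwell time satisfies
`k_d ≥ ϵ·ln μ / ln(1/κ_p) + 1`, then
`V_{p⁺}(x⁺,x̂⁺) ≤ κ_p^{(ϵ−1)/ϵ}·(V_p(x,x̂)·κ_p^{−l/ϵ})
  + κ_p^{−k_d/ϵ}·(ρ_p(‖w−ŵ‖) + γ_p(η))`. -/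
theorem dwell_time_decay_switch
    {X W P : Type*} [NormedAddCommGroup X] [NormedAddCommGroup W]
    (f : P → X → W → X) (V : P → X → X → ℝ) (κ : P → ℝ) (μ ϵ η : ℝ)
    (ρ γ : P → ℝ → ℝ) (l kd : ℕ) (p pplus : P)
    (hκ0 : ∀ q, 0 < κ q) (hκ1 : ∀ q, κ q < 1) (hϵ : 1 < ϵ) (hμ : 1 ≤ μ)
    (hswitch : pplus ≠ p)
    (hl : (l : ℝ) = (kd : ℝ) - 1) (hkd1 : 1 ≤ kd)
    -- dwell-time condition k_d ≥ ϵ·ln(μ)/ln(1/κ_p) + 1: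
    (hdwell : (kd : ℝ) ≥ ϵ * Real.log μ / Real.log (1 / κ p) + 1)
    (hV_nonneg : ∀ q x y, V q x y ≥ 0)
    -- V_{p⁺}(x,y) ≤ μ V_p(x,y) for all modes:
    (hmu : ∀ q q' x y, V q x y ≤ μ * V q' x y)
    (hρ_nonneg : ∀ q s, 0 ≤ s → 0 ≤ ρ q s) (hγ_nonneg : ∀ q s, 0 ≤ s → 0 ≤ γ q s)
    (hη : 0 ≤ η)
    (x xh : X) (w wh : W) (xhplus : X)
    (hstep : V p (f p x w) xhplus ≤ κ p * V p x xh + ρ p ‖w - wh‖ + γ p η) :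
    V pplus (f p x w) xhplus ≤
      κ p ^ ((ϵ - 1) / ϵ) * (V p x xh * κ p ^ (-(l : ℝ) / ϵ)) +
        κ p ^ (-(kd : ℝ) / ϵ) * (ρ p ‖w - wh‖ + γ p η) := by
  set K := κ p with hK
  have hK0 : 0 < K := hκ0 p
  have hK1 : K < 1 := hκ1 p
  have hϵ0 : (0:ℝ) < ϵ := lt_trans one_pos hϵ
  have hμ0 : (0:ℝ) < μ := lt_of_lt_of_le one_pos hμ
  have hL : 0 < Real.log (1 / K) := Real.log_pos (by rw [lt_div_iff₀ hK0]; linarith)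
  have hlogK : Real.log (1 / K) = -Real.log K := by
    rw [one_div, Real.log_inv]
  -- dwell: μ ≤ K ^ (-(kd-1)/ϵ)
  have hμle : μ ≤ K ^ (-((kd:ℝ)-1)/ϵ) := by
    have h1 : ϵ * Real.log μ / Real.log (1/K) ≤ (kd:ℝ) - 1 := by linarith
    have h2 : ϵ * Real.log μ ≤ ((kd:ℝ) - 1) * Real.log (1/K) :=
      (div_le_iff₀ hL).mp h1
    have h3 : Real.log μ ≤ (-((kd:ℝ)-1)/ϵ) * Real.log K := by
      rw [hlogK] at h2
      rw [div_mul_eq_mul_div, le_div_iff₀ hϵ0]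
      nlinarith
    rw [Real.rpow_def_of_pos hK0, mul_comm]
    calc μ = Real.exp (Real.log μ) := (Real.exp_log hμ0).symm
      _ ≤ Real.exp ((-((kd:ℝ)-1)/ϵ) * Real.log K) := Real.exp_le_exp.mpr h3
  have hRG : 0 ≤ ρ p ‖w - wh‖ + γ p η :=
    add_nonneg (hρ_nonneg _ _ (norm_nonneg _)) (hγ_nonneg _ _ hη)
  have hE1 : K ^ (-((kd:ℝ)-1)/ϵ) * K ≤ K ^ ((ϵ-1)/ϵ) * K ^ (-(l:ℝ)/ϵ) := by
    have e : K ^ (-((kd:ℝ)-1)/ϵ) * K = K ^ (-((kd:ℝ)-1)/ϵ + 1) := by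
      rw [Real.rpow_add hK0, Real.rpow_one]
    rw [e, hl, ← Real.rpow_add hK0]
    apply Real.rpow_le_rpow_of_exponent_ge hK0 hK1.le
    have h : (ϵ-1)/ϵ ≤ 1 := by rw [div_le_one hϵ0]; linarith
    linarith
  have hE2 : K ^ (-((kd:ℝ)-1)/ϵ) ≤ K ^ (-(kd:ℝ)/ϵ) := by
    apply Real.rpow_le_rpow_of_exponent_ge hK0 hK1.le
    gcongr
    linarith
  calc V pplus (f p x w) xhplus ≤ μ * V p (f p x w) xhplus := hmu _ _ _ _
    _ ≤ μ * (K * V p x xh + ρ p ‖w - wh‖ + γ p η) :=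
        mul_le_mul_of_nonneg_left hstep hμ0.le
    _ = (μ * K) * V p x xh + μ * (ρ p ‖w - wh‖ + γ p η) := by ring
    _ ≤ (K ^ (-((kd:ℝ)-1)/ϵ) * K) * V p x xh
          + K ^ (-((kd:ℝ)-1)/ϵ) * (ρ p ‖w - wh‖ + γ p η) := by
        apply add_le_add
        · exact mul_le_mul_of_nonneg_right
            (mul_le_mul_of_nonneg_right hμle hK0.le) (hV_nonneg _ _ _)
        · exact mul_le_mul_of_nonneg_right hμle hRG
    _ ≤ K ^ ((ϵ-1)/ϵ) * (V p x xh * K ^ (-(l:ℝ)/ϵ))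
          + K ^ (-(kd:ℝ)/ϵ) * (ρ p ‖w - wh‖ + γ p η) := by
        apply add_le_add
        · calc (K ^ (-((kd:ℝ)-1)/ϵ) * K) * V p x xh
              ≤ (K ^ ((ϵ-1)/ϵ) * K ^ (-(l:ℝ)/ϵ)) * V p x xh :=
                mul_le_mul_of_nonneg_right hE1 (hV_nonneg _ _ _)
            _ = K ^ ((ϵ-1)/ϵ) * (V p x xh * K ^ (-(l:ℝ)/ϵ)) := by ring
        · exact mul_le_mul_of_nonneg_right hE2 hRG
end

section
/- Output-distance bound for the lifted simulation function: suppose the output map h satisfies ‖h(x) − h(y)‖ ≤ ℓ(‖x−y‖) with ℓ ∈ K∞, and α̲_p(‖x−x̂‖) ≤ V_p(x,x̂) with α̲_p ∈ K∞, κ_p ∈ (0,1), ϵ > 1, l ≥ 0. Let α̂ := max_p { ℓ ∘ α̲_p⁻¹ } and α := α̂⁻¹. Then for all (x,p,l) and (x̂,p,l): α(‖h(x) − h(x̂)‖) ≤ V((x,p,l),(x̂,p,l)), where V((x,p,l),(x̂,p,l)) = V_p(x,x̂)·κ_p^{−l/ϵ}. -/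
/-- output-distance bound for the lifted simulation function.
If `‖h(x) − h(y)‖ ≤ ℓ(‖x−y‖)` with `ℓ ∈ K∞`, `α̲_p(‖x−x̂‖) ≤ V_p(x,x̂)`,
`κ_p ∈ (0,1)`, `ϵ > 1`, then with `α̂ = max_p ℓ ∘ α̲_p⁻¹` and `α = α̂⁻¹` one
has `α(‖h(x) − h(x̂)‖) ≤ V((x,p,l),(x̂,p,l)) = V_p(x,x̂)·κ_p^{−l/ϵ}`, stated
here equivalently in the inverse form
`‖h(x) − h(x̂)‖ ≤ α̂(V_p(x,x̂)·κ_p^{−l/ϵ})`. -/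
theorem output_distance_bound
    {X Y P : Type*} [NormedAddCommGroup X] [NormedAddCommGroup Y]
    [Fintype P] [Nonempty P]
    (h : X → Y) (V : P → X → X → ℝ) (κ : P → ℝ) (αlo αloinv : P → ℝ → ℝ)
    (ℓ : ℝ → ℝ) (ϵ : ℝ)
    (hκ0 : ∀ p, 0 < κ p) (hκ1 : ∀ p, κ p < 1) (hϵ : 1 < ϵ)
    -- ℓ ∈ K∞ (monotone, vanishing at 0):
    (hℓ_mono : StrictMonoOn ℓ (Set.Ici 0)) (hℓ0 : ℓ 0 = 0)
    (hℓ_nonneg : ∀ s, 0 ≤ s → 0 ≤ ℓ s)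
    -- Lipschitz-type bound on the output map:
    (hLip : ∀ x y, ‖h x - h y‖ ≤ ℓ ‖x - y‖)
    -- lower sandwich bound with inverse αloinv of the K∞ function αlo:
    (hlo : ∀ p x y, αlo p ‖x - y‖ ≤ V p x y)
    (hV_nonneg : ∀ p x y, 0 ≤ V p x y)
    (hαinv : ∀ p (r s : ℝ), 0 ≤ r → αlo p r ≤ s → r ≤ αloinv p s)
    (hαinv_mono : ∀ p, Monotone (αloinv p)) :
    ∀ (p : P) (l : ℕ) (x xh : X),
      ‖h x - h xh‖ ≤
        Finset.univ.sup' Finset.univ_nonempty (fun q : P =>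
          ℓ (αloinv q (V p x xh * κ p ^ (-(l : ℝ) / ϵ)))) := by
  intro p l x xh
  have hκp := hκ0 p
  -- κ^(−l/ϵ) ≥ 1
  have hexp : (1:ℝ) ≤ κ p ^ (-(l : ℝ) / ϵ) := by
    rw [show (1:ℝ) = κ p ^ (0:ℝ) by simp]
    apply Real.rpow_le_rpow_of_exponent_ge hκp (le_of_lt (hκ1 p))
    apply div_nonpos_of_nonpos_of_nonneg
    · simp
    · linarith
  have hVle : V p x xh ≤ V p x xh * κ p ^ (-(l : ℝ) / ϵ) := by
    nlinarith [hV_nonneg p x xh, Real.rpow_pos_of_pos hκp (-(l : ℝ) / ϵ)]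
  have hnorm : (0:ℝ) ≤ ‖x - xh‖ := norm_nonneg _
  have h1 : ‖x - xh‖ ≤ αloinv p (V p x xh) := hαinv p _ _ hnorm (hlo p x xh)
  have h2 : ‖x - xh‖ ≤ αloinv p (V p x xh * κ p ^ (-(l : ℝ) / ϵ)) :=
    h1.trans (hαinv_mono p hVle)
  have h3 : ℓ ‖x - xh‖ ≤ ℓ (αloinv p (V p x xh * κ p ^ (-(l : ℝ) / ϵ))) :=
    hℓ_mono.monotoneOn hnorm (hnorm.trans h2) h2
  have h4 : ‖h x - h xh‖ ≤ ℓ (αloinv p (V p x xh * κ p ^ (-(l : ℝ) / ϵ))) :=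
    (hLip x xh).trans h3
  exact h4.trans (Finset.le_sup' (f := fun q : P => ℓ (αloinv q (V p x xh * κ p ^ (-(l : ℝ) / ϵ)))) (Finset.mem_univ p))
end

section
/- Equivalence of opacity under output-identical abstraction with exactly matching runs: if R ⊆ X × X̂ is a 0-approximate InitSOP simulation relation (i.e., ε̂ = 0, so related states have identical outputs) from T(Σ) to T(Σ̂), and T(Σ̂) is δ-approximate initial-state opaque, then T(Σ) is δ-approximate initial-state opaque for the same δ ≥ 0. -/
/-- if `R` is a `0`-approximate InitSOP simulation relation
(related states have identical outputs) from `T(Σ)` to `T(Σ̂)` and `T(Σ̂)` is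
`δ`-approximate initial-state opaque, then so is `T(Σ)`, for the same `δ ≥ 0`. -/
theorem opacity_preserved_by_exact_InitSOP_relation
    {X Xh U Uh Y : Type*} [PseudoMetricSpace Y]
    (X0 Xs : Set X) (Xh0 Xhs : Set Xh)
    (F : X → U → Set X) (Fh : Xh → Uh → Set Xh)
    (H : X → Y) (Hh : Xh → Y)
    (R : Set (X × Xh)) (δ : ℝ) (hδ : 0 ≤ δ)
    -- R is a 0-InitSOP simulation relation:
    (h1a : ∀ z0 ∈ X0 ∩ Xs, ∃ zh0 ∈ Xh0 ∩ Xhs, (z0, zh0) ∈ R)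
    (h1b : ∀ zh0 ∈ Xh0 \ Xhs, ∃ z0 ∈ X0 \ Xs, (z0, zh0) ∈ R)
    (h2 : ∀ z zh, (z, zh) ∈ R → H z = Hh zh)
    (h3a : ∀ z zh, (z, zh) ∈ R → ∀ u, ∀ z' ∈ F z u,
      ∃ uh, ∃ zh' ∈ Fh zh uh, (z', zh') ∈ R)
    (h3b : ∀ z zh, (z, zh) ∈ R → ∀ uh, ∀ zh' ∈ Fh zh uh,
      ∃ u, ∃ z' ∈ F z u, (z', zh') ∈ R)
    (habs : ApproxInitStateOpaque Xh0 Xhs Fh Hh δ) :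
    ApproxInitStateOpaque X0 Xs F H δ := by
  intro n z hz0 hrun
  classical
  obtain ⟨zh0, hzh0, hR0⟩ := h1a (z 0) hz0
  -- lift the run to the abstract system
  let zh : ℕ → Xh := fun k => Nat.rec zh0
    (fun k ih =>
      if h : ∃ zh', (∃ uh, zh' ∈ Fh ih uh) ∧ (z (k + 1), zh') ∈ R
      then h.choose else ih) k
  have hstep : ∀ k < n, (z k, zh k) ∈ R →
      ((∃ uh, zh (k + 1) ∈ Fh (zh k) uh) ∧ (z (k + 1), zh (k + 1)) ∈ R) := by
    intro k hk hR
    obtain ⟨u, hu⟩ := hrun k hk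
    obtain ⟨uh, zh', hzh', hR'⟩ := h3a _ _ hR u _ hu
    have h : ∃ y, (∃ uh, y ∈ Fh (zh k) uh) ∧ (z (k + 1), y) ∈ R :=
      ⟨zh', ⟨uh, hzh'⟩, hR'⟩
    have : zh (k + 1) = h.choose := by simp [zh, dif_pos h]
    rw [this]; exact h.choose_spec
  have hinv : ∀ k ≤ n, (z k, zh k) ∈ R := by
    intro k hk
    induction k with
    | zero => exact hR0
    | succ k ih =>
      exact (hstep k (lt_of_lt_of_le (Nat.lt_succ_self k) hk)
        (ih (le_of_lt (lt_of_lt_of_le (Nat.lt_succ_self k) hk)))).2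
  have hrunh : ∀ k < n, ∃ uh, zh (k + 1) ∈ Fh (zh k) uh := by
    intro k hk
    exact (hstep k hk (hinv k (le_of_lt hk))).1
  obtain ⟨zhb, hzhb0, hzhbrun, hzhbd⟩ := habs n zh hzh0 hrunh
  obtain ⟨zb0, hzb0, hRb0⟩ := h1b (zhb 0) hzhb0
  -- pull the non-secret abstract run back to the concrete system
  let zb : ℕ → X := fun k => Nat.rec zb0
    (fun k ih =>
      if h : ∃ z', (∃ u, z' ∈ F ih u) ∧ (z', zhb (k + 1)) ∈ R
      then h.choose else ih) k
  have hbstep : ∀ k < n, (zb k, zhb k) ∈ R →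
      ((∃ u, zb (k + 1) ∈ F (zb k) u) ∧ (zb (k + 1), zhb (k + 1)) ∈ R) := by
    intro k hk hR
    obtain ⟨uh, hu⟩ := hzhbrun k hk
    obtain ⟨u, z', hz', hR'⟩ := h3b _ _ hR uh _ hu
    have h : ∃ y, (∃ u, y ∈ F (zb k) u) ∧ (y, zhb (k + 1)) ∈ R :=
      ⟨z', ⟨u, hz'⟩, hR'⟩
    have : zb (k + 1) = h.choose := by simp [zb, dif_pos h]
    rw [this]; exact h.choose_spec
  have hbinv : ∀ k ≤ n, (zb k, zhb k) ∈ R := by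
    intro k hk
    induction k with
    | zero => exact hRb0
    | succ k ih =>
      exact (hbstep k (lt_of_lt_of_le (Nat.lt_succ_self k) hk)
        (ih (le_of_lt (lt_of_lt_of_le (Nat.lt_succ_self k) hk)))).2
  refine ⟨zb, hzb0, ?_, ?_⟩
  · intro k hk
    exact (hbstep k hk (hbinv k (le_of_lt hk))).1
  · intro k hk
    rw [h2 _ _ (hinv k hk), h2 _ _ (hbinv k hk)]
    exact hzhbd k hk
end
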